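/- In an orthogonal FDSLRM the following closed forms hold: M_F V = V; Û = V'M_F V·D + σ₀²I_l = diag(σ₀² + σⱼ²‖vⱼ‖²); Ŵ⁻¹ = D·Û⁻¹ = diag(ρⱼ/‖vⱼ‖²); and the j-th row of T̂ = Ŵ⁻¹V'M_F equals ρⱼ·vⱼ'/‖vⱼ‖², where ρⱼ = σⱼ²‖vⱼ‖²/(σ₀² + σⱼ²‖vⱼ‖²). -/

import Mathlib

open Matrix

/-- Closed forms in an orthogonal FDSLRM: `M_F V = V`,
`Û = diag(σ₀² + σⱼ²‖vⱼ‖²)`, `Ŵ⁻¹ = DÛ⁻¹ = diag(ρⱼ/‖vⱼ‖²)` and the j-th row of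
`T̂` is `ρⱼ vⱼ'/‖vⱼ‖²`, where `ρⱼ = σⱼ²‖vⱼ‖²/(σ₀² + σⱼ²‖vⱼ‖²)`. -/
theorem stmt_10 {n k l : ℕ} (hn : 0 < n) (hk : 0 < k) (hl : 0 < l)
    (hnkl : k + l < n)
    (F : Matrix (Fin n) (Fin k) ℝ) (hF : F.rank = k)
    (V : Matrix (Fin n) (Fin l) ℝ)
    (hcols : ∀ j : Fin l, (fun i => V i j) ≠ 0)
    (nv : Fin l → ℝ) (hnv : ∀ j, nv j = ∑ i, V i j ^ 2)
    (hFV : Fᵀ * V = 0) (hVV : Vᵀ * V = Matrix.diagonal nv)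
    (σ0 : ℝ) (hσ0 : 0 < σ0)
    (σ : Fin l → ℝ) (hσ : ∀ j, 0 < σ j)
    (D : Matrix (Fin l) (Fin l) ℝ) (hD : D = Matrix.diagonal σ)
    (Mf : Matrix (Fin n) (Fin n) ℝ) (hMf : Mf = 1 - F * (Fᵀ * F)⁻¹ * Fᵀ)
    (What : Matrix (Fin l) (Fin l) ℝ) (hWhat : What = Vᵀ * Mf * V + σ0 • D⁻¹)
    (Uhat : Matrix (Fin l) (Fin l) ℝ)
    (hUhat : Uhat = Vᵀ * Mf * V * D + σ0 • (1 : Matrix (Fin l) (Fin l) ℝ))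
    (That : Matrix (Fin l) (Fin n) ℝ) (hThat : That = What⁻¹ * Vᵀ * Mf)
    (ρ : Fin l → ℝ) (hρ : ∀ j, ρ j = σ j * nv j / (σ0 + σ j * nv j)) :
    Mf * V = V ∧
    Uhat = Matrix.diagonal (fun j => σ0 + σ j * nv j) ∧
    What⁻¹ = D * Uhat⁻¹ ∧
    What⁻¹ = Matrix.diagonal (fun j => ρ j / nv j) ∧
    (∀ j : Fin l, ∀ i : Fin n, That j i = ρ j * V i j / nv j) := by
  -- positivity of nv
  have hnvpos : ∀ j, 0 < nv j := by
    intro j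
    rw [hnv j]
    rcases Function.ne_iff.mp (hcols j) with ⟨i, hi⟩
    simp only [Pi.zero_apply] at hi
    exact Finset.sum_pos' (fun i _ => sq_nonneg _)
      ⟨i, Finset.mem_univ i, by positivity⟩
  have hden : ∀ j, 0 < σ0 + σ j * nv j := fun j =>
    add_pos hσ0 (mul_pos (hσ j) (hnvpos j))
  have hσne : ∀ j, σ j ≠ 0 := fun j => (hσ j).ne'
  have dcongr : ∀ (f g : Fin l → ℝ), (∀ j, f j = g j) →
      Matrix.diagonal f = Matrix.diagonal g := fun f g h => by rw [funext h]
  -- Mf * V = V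
  have hMV : Mf * V = V := by
    rw [hMf, Matrix.sub_mul, Matrix.one_mul, Matrix.mul_assoc, Matrix.mul_assoc,
      hFV, Matrix.mul_zero, Matrix.mul_zero, sub_zero]
  -- Vᵀ Mf V = diagonal nv
  have hVMV : Vᵀ * Mf * V = Matrix.diagonal nv := by
    rw [Matrix.mul_assoc, hMV, hVV]
  -- Mf symmetric
  have hMfT : Mfᵀ = Mf := by
    rw [hMf]
    simp only [Matrix.transpose_sub, Matrix.transpose_one, Matrix.transpose_mul,
      Matrix.transpose_transpose, Matrix.transpose_nonsing_inv, Matrix.mul_assoc]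
  have hVMf : Vᵀ * Mf = Vᵀ := by
    have := congrArg Matrix.transpose hMV
    rw [Matrix.transpose_mul, hMfT] at this
    exact this
  -- D⁻¹
  have hDinv : D⁻¹ = Matrix.diagonal (fun j => (σ j)⁻¹) := by
    apply Matrix.inv_eq_right_inv
    rw [hD, Matrix.diagonal_mul_diagonal, ← Matrix.diagonal_one]
    exact dcongr _ _ fun j => mul_inv_cancel₀ (hσne j)
  -- Uhat
  have hU : Uhat = Matrix.diagonal (fun j => σ0 + σ j * nv j) := by
    rw [hUhat, hVMV, hD, Matrix.diagonal_mul_diagonal, ← Matrix.diagonal_one,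
      ← Matrix.diagonal_smul, Matrix.diagonal_add]
    exact dcongr _ _ fun j => by simp [smul_eq_mul]; ring
  -- What
  have hW : What = Matrix.diagonal (fun j => nv j + σ0 * (σ j)⁻¹) := by
    rw [hWhat, hVMV, hDinv, ← Matrix.diagonal_smul, Matrix.diagonal_add]
    exact dcongr _ _ fun j => by simp [smul_eq_mul]
  have hWinv : What⁻¹ = Matrix.diagonal (fun j => σ j / (σ0 + σ j * nv j)) := by
    apply Matrix.inv_eq_right_inv
    rw [hW, Matrix.diagonal_mul_diagonal, ← Matrix.diagonal_one]
    refine dcongr _ _ fun j => ?_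
    have h1 := hσne j
    have h2 := (hden j).ne'
    field_simp
    rw [div_eq_one_iff_eq (by rw [mul_comm]; exact h2)]
    ring
  have hUinv : Uhat⁻¹ = Matrix.diagonal (fun j => (σ0 + σ j * nv j)⁻¹) := by
    apply Matrix.inv_eq_right_inv
    rw [hU, Matrix.diagonal_mul_diagonal, ← Matrix.diagonal_one]
    exact dcongr _ _ fun j => mul_inv_cancel₀ (hden j).ne'
  refine ⟨hMV, hU, ?_, ?_, ?_⟩
  · rw [hWinv, hUinv, hD, Matrix.diagonal_mul_diagonal]
    exact dcongr _ _ fun j => div_eq_mul_inv _ _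
  · rw [hWinv]
    refine dcongr _ _ fun j => ?_
    rw [hρ j]
    have h1 := (hnvpos j).ne'
    have h2 := (hden j).ne'
    field_simp
  · intro j i
    rw [hThat, Matrix.mul_assoc, hVMf, hWinv, Matrix.diagonal_mul,
      Matrix.transpose_apply, hρ j]
    have h1 := (hnvpos j).ne'
    have h2 := (hden j).ne'
    field_simp
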